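/- Let B be a Banach A-bimodule, let n ≥ 0 be an even integer, and let D: A^(n) → B^(n+1) be a bounded derivation of the Banach algebra A^(n) into the Banach A^(n)-bimodule B^(n+1). If Z̃ℓ_{A^(n+2)}(B^(n+2)) = B^(n+2), i.e., for every b^(n+2) ∈ B^(n+2) the map a^(n+2) ↦ b^(n+2)a^(n+2) from A^(n+2) into B^(n+2) is weak*-to-weak continuous, then the second adjoint D'': A^(n+2) → B^(n+3) is again a derivation (with respect to the first Arens product on A^(n+2) and the induced A^(n+2)-bimodule structure on B^(n+3)). -/

import Mathlib

open NormedSpace Filter Topology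

noncomputable section

universe u

/-- The Arens adjoint of a bounded bilinear map `m : X × Y → Z`:
`⟨adjB m z' x, y⟩ = ⟨z', m x y⟩`.  Its triple iterate `adjB (adjB (adjB m))` is the Arens
(triple adjoint) extension `m*** : X** × Y** → Z**`. -/
def adjB {X Y Z : Type*} [NormedAddCommGroup X] [NormedSpace ℂ X]
    [NormedAddCommGroup Y] [NormedSpace ℂ Y] [NormedAddCommGroup Z] [NormedSpace ℂ Z]
    (m : X →L[ℂ] Y →L[ℂ] Z) : StrongDual ℂ Z →L[ℂ] X →L[ℂ] StrongDual ℂ Y :=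
  ((ContinuousLinearMap.compL ℂ X (Y →L[ℂ] Z) (Y →L[ℂ] ℂ)).flip m).comp
    (ContinuousLinearMap.compL ℂ Y Z ℂ)

/-- A pair consisting of a Banach algebra (carrier `X`, multiplication `mul`) and a Banach
`X`-bimodule (carrier `Y`, left action `pl`, right action `pr`), recorded through its bounded
(bi)linear structure maps. -/
structure APair : Type (u + 1) where
  X : Type u
  Y : Type u
  [nX : NormedAddCommGroup X]
  [mX : NormedSpace ℂ X]
  [nY : NormedAddCommGroup Y]
  [mY : NormedSpace ℂ Y]
  mul : X →L[ℂ] X →L[ℂ] X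
  pl : X →L[ℂ] Y →L[ℂ] Y
  pr : Y →L[ℂ] X →L[ℂ] Y

attribute [instance] APair.nX APair.mX APair.nY APair.mY

/-- Passage to biduals: `X ↦ X**`, `Y ↦ Y**`, with the first Arens product on `X**` and the
Arens triple-adjoint extensions of the module actions. -/
def APair.bidual (P : APair) : APair where
  X := StrongDual ℂ (StrongDual ℂ P.X)
  Y := StrongDual ℂ (StrongDual ℂ P.Y)
  mul := adjB (adjB (adjB P.mul))
  pl := adjB (adjB (adjB P.pl))
  pr := adjB (adjB (adjB P.pr))

/-- `P.iter k` is the `2k`-th dual level of the pair `P`: the Banach algebra `A^(2k)` acting on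
the Banach bimodule `B^(2k)`. -/
def APair.iter (P : APair) : ℕ → APair
  | 0 => P
  | k + 1 => (P.iter k).bidual

variable (A B : Type u) [NonUnitalNormedRing A] [NormedSpace ℂ A]
  [SMulCommClass ℂ A A] [IsScalarTower ℂ A A] [CompleteSpace A]
  [NormedAddCommGroup B] [NormedSpace ℂ B] [CompleteSpace B]

variable (πl : A →L[ℂ] B →L[ℂ] B) (πr : B →L[ℂ] A →L[ℂ] B)

/-- The base pair: the Banach algebra `A` together with the Banach `A`-bimodule `B`. -/
def basePair : APair where
  X := A
  Y := B
  mul := ContinuousLinearMap.mul ℂ A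
  pl := πl
  pr := πr

/-- The Banach-space adjoint (transpose) of a bounded linear map: `dualCLM f g = g ∘ f`. -/
def dualCLM {E F : Type*} [NormedAddCommGroup E] [NormedSpace ℂ E]
    [NormedAddCommGroup F] [NormedSpace ℂ F] (f : E →L[ℂ] F) :
    StrongDual ℂ F →L[ℂ] StrongDual ℂ E :=
  (ContinuousLinearMap.compL ℂ E F ℂ).flip f

/-- `D : X → Y*` is a derivation of the Banach algebra `P.X` into the dual bimodule `(P.Y)*`,
whose actions are `⟨b'·a, b⟩ = ⟨b', ab⟩` and `⟨a·b', b⟩ = ⟨b', ba⟩`: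
`D(xy) = x·D(y) + D(x)·y`. -/
def IsDerivationDual (P : APair) (D : P.X →L[ℂ] StrongDual ℂ P.Y) : Prop :=
  ∀ x y : P.X, D (P.mul x y) = (D y).comp (P.pr.flip x) + (D x).comp (P.pl y)

section Aux

variable {X : Type*} [NormedAddCommGroup X] [NormedSpace ℂ X]

/-- The canonical embedding into the bidual, with weak*-topologized codomain. -/
def iotaW (X : Type*) [NormedAddCommGroup X] [NormedSpace ℂ X] :
    X → WeakDual ℂ (StrongDual ℂ X) :=
  fun x => inclusionInDoubleDual ℂ X x

lemma iotaW_apply (x : X) (f : StrongDual ℂ X) : iotaW X x f = f x := rfl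

/-- Helly-type exact interpolation: an element of the bidual agrees with the evaluation at some
point of `X` on any finite set of functionals. -/
lemma helly_exact (F : StrongDual ℂ (StrongDual ℂ X)) (I : Finset (StrongDual ℂ X)) :
    ∃ x : X, ∀ f ∈ I, f x = F f := by
  classical
  set T : X →ₗ[ℂ] (I → ℂ) := LinearMap.pi (fun i : I => ((i : StrongDual ℂ X) : X →ₗ[ℂ] ℂ)) with hT
  set v : I → ℂ := fun i => F (i : StrongDual ℂ X) with hv
  by_cases hvmem : v ∈ LinearMap.range T
  · obtain ⟨x, hx⟩ := hvmem
    refine ⟨x, fun f hf => ?_⟩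
    have := congrFun hx ⟨f, hf⟩
    simpa [hT, hv] using this
  · exfalso
    obtain ⟨φ, hφv, hφ⟩ :=
      Submodule.exists_dual_map_eq_bot_of_notMem hvmem inferInstance
    have hker : ∀ x : X, φ (T x) = 0 := by
      intro x
      have hmem : φ (T x) ∈ (LinearMap.range T).map φ := ⟨T x, ⟨x, rfl⟩, rfl⟩
      rw [hφ] at hmem
      exact (Submodule.mem_bot _).mp hmem
    set δ : I → (I → ℂ) := fun i j => if i = j then 1 else 0 with hδ
    have hφsum : ∀ w : I → ℂ, φ w = ∑ i : I, w i * φ (δ i) := by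
      intro w
      conv_lhs => rw [pi_eq_sum_univ w]
      rw [map_sum]
      simp [smul_eq_mul, hδ]
    set g : StrongDual ℂ X := ∑ i : I, φ (δ i) • (i : StrongDual ℂ X) with hg
    have hgzero : g = 0 := by
      ext x
      have h1 : g x = ∑ i : I, φ (δ i) * (i : StrongDual ℂ X) x := by
        simp [hg, ContinuousLinearMap.sum_apply, smul_eq_mul]
      have h2 : φ (T x) = 0 := hker x
      have h3 : φ (T x) = ∑ i : I, (i : StrongDual ℂ X) x * φ (δ i) := by
        rw [hφsum (T x)]; rfl
      have h4 := h3.symm.trans h2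
      simp only [ContinuousLinearMap.zero_apply]
      rw [h1, ← h4]
      exact Finset.sum_congr rfl (fun i _ => mul_comm _ _)
    have hFg : F g = φ v := by
      rw [hg, map_sum, hφsum v]
      refine Finset.sum_congr rfl (fun i _ => ?_)
      rw [map_smul, smul_eq_mul, mul_comm]
    rw [hgzero, map_zero] at hFg
    exact hφv hFg.symm

/-- The canonical embedding of `X` into its bidual has weak*-dense range. -/
lemma denseRange_iotaW : DenseRange (iotaW X) := by
  intro F
  rw [mem_closure_iff]
  intro U hU hFU
  obtain ⟨V, hV, rfl⟩ := (@isOpen_induced_iff (WeakDual ℂ (StrongDual ℂ X)) (StrongDual ℂ X → ℂ)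
    Pi.topologicalSpace U (fun v f => v f)).mp hU
  have hFV : (fun f : StrongDual ℂ X => F f) ∈ V := hFU
  obtain ⟨I, u, hu, hsub⟩ := isOpen_pi_iff.mp hV _ hFV
  obtain ⟨x, hx⟩ := helly_exact F I
  refine ⟨iotaW X x, hsub (fun f hf => ?_), ⟨x, rfl⟩⟩
  show iotaW X x f ∈ u f
  rw [iotaW_apply, hx f hf]
  exact (hu f hf).2

end Aux

set_option maxHeartbeats 2000000 in
/-- The general bidual-extension lemma for an arbitrary pair. -/
lemma key_derivation (P : APair) (D : P.X →L[ℂ] StrongDual ℂ P.Y)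
    (hD : IsDerivationDual P D)
    (hz : ∀ b2 : StrongDual ℂ (StrongDual ℂ P.Y),
      Continuous fun a2 : WeakDual ℂ (StrongDual ℂ P.X) =>
        (adjB (adjB (adjB P.pr)) b2 a2 :
          WeakSpace ℂ (StrongDual ℂ (StrongDual ℂ P.Y)))) :
    IsDerivationDual P.bidual (dualCLM (dualCLM D)) := by
  have main : ∀ F G : StrongDual ℂ (StrongDual ℂ P.X),
      (dualCLM (dualCLM D)) (adjB (adjB (adjB P.mul)) F G)
        = ((dualCLM (dualCLM D)) G).comp ((adjB (adjB (adjB P.pr))).flip F)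
          + ((dualCLM (dualCLM D)) F).comp (adjB (adjB (adjB P.pl)) G) := by
    intro F G
    ext b2
    show F (adjB (adjB P.mul) G (dualCLM D b2))
        = G (dualCLM D (adjB (adjB (adjB P.pr)) b2 F))
          + F (dualCLM D (adjB (adjB (adjB P.pl)) G b2))
    -- the set of `F` satisfying the identity is weak*-closed
    have hclosed : IsClosed {F : WeakDual ℂ (StrongDual ℂ P.X) |
        F (adjB (adjB P.mul) G (dualCLM D b2))
        = G (dualCLM D (adjB (adjB (adjB P.pr)) b2 F))
          + F (dualCLM D (adjB (adjB (adjB P.pl)) G b2))} := by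
      apply isClosed_eq
      · exact WeakDual.eval_continuous _
      · apply Continuous.add
        · exact ((G.comp (dualCLM D)).continuous).comp (hz b2)
        · exact WeakDual.eval_continuous _
    -- the identity holds on the canonical image of `P.X`
    have hmem : Set.range (iotaW P.X) ⊆ {F : WeakDual ℂ (StrongDual ℂ P.X) |
        F (adjB (adjB P.mul) G (dualCLM D b2))
        = G (dualCLM D (adjB (adjB (adjB P.pr)) b2 F))
          + F (dualCLM D (adjB (adjB (adjB P.pl)) G b2))} := by
      rintro _ ⟨a, rfl⟩
      show (iotaW P.X a) (adjB (adjB P.mul) G (dualCLM D b2))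
        = G (dualCLM D (adjB (adjB (adjB P.pr)) b2 (iotaW P.X a)))
          + (iotaW P.X a) (dualCLM D (adjB (adjB (adjB P.pl)) G b2))
      rw [iotaW_apply, iotaW_apply]
      show G (adjB P.mul (dualCLM D b2) a)
        = G (dualCLM D (adjB (adjB (adjB P.pr)) b2 (iotaW P.X a)))
          + G (adjB (adjB P.pl) b2 (D a))
      rw [← map_add G]
      congr 1
      ext b
      show b2 (D (P.mul a b))
        = b2 (adjB (adjB P.pr) (iotaW P.X a) (D b)) + b2 (adjB P.pl (D a) b)
      have e2 : adjB (adjB P.pr) ((iotaW P.X a : StrongDual ℂ (StrongDual ℂ P.X))) (D b)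
          = (D b).comp (P.pr.flip a) := by
        ext y
        show (iotaW P.X a) (adjB P.pr (D b) y) = (D b) (P.pr y a)
        rw [iotaW_apply]
        rfl
      have e3 : adjB P.pl (D a) b = (D a).comp (P.pl b) := rfl
      rw [e2, e3, ← map_add b2, ← hD a b]
    -- conclude by weak*-density
    have hF : (F : WeakDual ℂ (StrongDual ℂ P.X)) ∈ closure (Set.range (iotaW P.X)) :=
      denseRange_iotaW F
    have hFS := closure_mono hmem hF
    rwa [hclosed.closure_eq] at hFS
  exact main

/-- with `n = 2*j ≥ 0` even; `P` is level `n`, so `A^(n) = P.X`,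
`B^(n) = P.Y`, `B^(n+1) = (P.Y)*`, and `P.bidual` is level `n+2`: if
`D : A^(n) → B^(n+1)` is a bounded derivation and `Z̃ℓ_{A^(n+2)}(B^(n+2)) = B^(n+2)`
(for every `b^(n+2)` the map `a^(n+2) ↦ b^(n+2)a^(n+2)` is weak*-to-weak continuous), then
the second adjoint `D'' : A^(n+2) → B^(n+3)` is again a derivation. -/
theorem stmt19
    (hℓ : ∀ (a b : A) (x : B), πl (a * b) x = πl a (πl b x))
    (hr : ∀ (x : B) (a b : A), πr (πr x a) b = πr x (a * b))
    (hm : ∀ (a : A) (x : B) (b : A), πr (πl a x) b = πl a (πr x b))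
    (j : ℕ)
    (D : ((basePair A B πl πr).iter j).X →L[ℂ] StrongDual ℂ ((basePair A B πl πr).iter j).Y)
    (hD : IsDerivationDual ((basePair A B πl πr).iter j) D)
    (hz : ∀ b2 : StrongDual ℂ (StrongDual ℂ ((basePair A B πl πr).iter j).Y),
      Continuous fun a2 : WeakDual ℂ (StrongDual ℂ ((basePair A B πl πr).iter j).X) =>
        (adjB (adjB (adjB ((basePair A B πl πr).iter j).pr)) b2 a2 :
          WeakSpace ℂ (StrongDual ℂ (StrongDual ℂ ((basePair A B πl πr).iter j).Y)))) :
    IsDerivationDual ((basePair A B πl πr).iter j).bidual (dualCLM (dualCLM D)) :=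
  key_derivation _ D hD hz

end
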